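/- Let γ > 0 and let f : ℂ → ℂ be entire with power series f(z) = ∑_{n=0}^∞ a_n zⁿ (valid for all z ∈ ℂ). Then f belongs to the RBF space H_γ if and only if ∑_{k=0}^∞ (k!·γ^{2k}/2^k) · |∑_{j=0}^{⌊k/2⌋} a_{k−2j}/(γ^{2j} j!)|² < ∞. -/

import Mathlib

set_option maxHeartbeats 1000000

open MeasureTheory Complex Set Filter Finset

/-- Squared-norm density of the RBF space `H_γ`:
`(2/(πγ²)) |f z|² exp((z − conj z)²/γ²)`, where
`exp((z − conj z)²/γ²) = exp(−4 (Im z)²/γ²)`. -/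
noncomputable def rbfDensity (γ : ℝ) (f : ℂ → ℂ) (z : ℂ) : ℝ :=
  (2 / (Real.pi * γ ^ 2)) * ‖f z‖ ^ 2 * Real.exp (-(4 * z.im ^ 2) / γ ^ 2)

lemma summable_norm_coeff' {a : ℕ → ℂ} {f : ℂ → ℂ}
    (hf : ∀ z : ℂ, HasSum (fun n : ℕ => a n * z ^ n) (f z)) (z : ℂ) :
    Summable (fun n => ‖a n * z ^ n‖) := by
  set R : ℝ := 2 * ‖z‖ + 1 with hR
  have hR0 : 0 < R := by positivity
  have h1 : Tendsto (fun n => ‖a n * ((R : ℝ) : ℂ) ^ n‖) atTop (nhds 0) := by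
    simpa using (hf ((R : ℝ) : ℂ)).summable.tendsto_atTop_zero.norm
  obtain ⟨C, hC⟩ := h1.bddAbove_range
  have hq0 : (0:ℝ) ≤ ‖z‖ / R := by positivity
  have hq : ‖z‖ / R < 1 := by
    rw [div_lt_one hR0, hR]; linarith [norm_nonneg z]
  refine Summable.of_nonneg_of_le (fun n => norm_nonneg _) (fun n => ?_)
    ((summable_geometric_of_lt_one hq0 hq).mul_left C)
  have hnorm : ‖a n * z ^ n‖ = ‖a n * ((R : ℝ) : ℂ) ^ n‖ * (‖z‖ / R) ^ n := by
    rw [norm_mul, norm_mul, norm_pow, norm_pow, Complex.norm_real,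
      Real.norm_eq_abs, abs_of_pos hR0, div_pow]
    field_simp
  rw [hnorm]
  have hCn : ‖a n * ((R : ℝ) : ℂ) ^ n‖ ≤ C := hC (Set.mem_range_self n)
  gcongr

lemma measurable_of_hasSum' {b : ℕ → ℂ} {g : ℂ → ℂ}
    (hg : ∀ z : ℂ, HasSum (fun n : ℕ => b n * z ^ n) (g z)) : Measurable g := by
  apply measurable_of_tendsto_metrizable
    (f := fun n (z : ℂ) => ∑ k ∈ Finset.range n, b k * z ^ k)
  · intro n
    exact Finset.measurable_sum _ fun k _ => (measurable_id.pow_const k).const_mul (b k)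
  · exact tendsto_pi_nhds.2 fun z => (hg z).tendsto_sum_nat

lemma tsum_ofReal_lt_top_iff {t : ℕ → ℝ} (ht : ∀ k, 0 ≤ t k) :
    (∑' k, ENNReal.ofReal (t k)) < ⊤ ↔ Summable t := by
  rw [lt_top_iff_ne_top]
  have h1 : ∀ k, ENNReal.ofReal (t k) = ((t k).toNNReal : ENNReal) := fun k => rfl
  simp_rw [h1]
  rw [ENNReal.tsum_coe_ne_top_iff_summable]
  constructor
  · intro h
    have := NNReal.summable_coe.2 h
    refine this.congr fun k => ?_
    exact Real.coe_toNNReal _ (ht k)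
  · intro h
    rw [← NNReal.summable_coe]
    refine h.congr fun k => ?_
    exact (Real.coe_toNNReal _ (ht k)).symm

lemma radial_lintegral {c : ℝ} (hc : 0 < c) (k : ℕ) :
    ∫⁻ r in Set.Ioi (0:ℝ), ENNReal.ofReal (r ^ (2 * k + 1) * Real.exp (-c * r ^ 2))
      = ENNReal.ofReal ((k.factorial : ℝ) / (2 * c ^ (k + 1))) := by
  have hk0 : (0:ℝ) ≤ (k:ℝ) := Nat.cast_nonneg k
  have hs : (-1 : ℝ) < 2 * (k:ℝ) + 1 := by linarith
  have hint : IntegrableOn (fun r : ℝ => r ^ (2 * k + 1) * Real.exp (-c * r ^ 2))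
      (Set.Ioi 0) := by
    refine (integrableOn_rpow_mul_exp_neg_mul_sq hc hs).congr_fun (fun x hx => ?_)
      measurableSet_Ioi
    rw [← Real.rpow_natCast x (2 * k + 1)]
    push_cast
    ring_nf
  rw [← ofReal_integral_eq_lintegral_ofReal hint]
  · congr 1
    have h2 : ∫ r in Set.Ioi (0:ℝ), r ^ (2 * k + 1) * Real.exp (-c * r ^ 2)
        = ∫ r in Set.Ioi (0:ℝ), r ^ ((2 * (k:ℝ) + 1) : ℝ) * Real.exp (-c * r ^ ((2:ℕ) : ℝ)) := by
      refine setIntegral_congr_fun measurableSet_Ioi (fun x hx => ?_)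
      rw [Real.rpow_natCast x 2, ← Real.rpow_natCast x (2 * k + 1)]
      push_cast
      ring_nf
    rw [h2]
    have h5 := _root_.integral_rpow_mul_exp_neg_mul_rpow (p := ((2:ℕ):ℝ))
      (q := 2 * (k:ℝ) + 1) (by norm_num) hs hc
    rw [h5]
    have h3 : -(2 * (k:ℝ) + 1 + 1) / ((2:ℕ):ℝ) = -((k:ℝ) + 1) := by push_cast; ring
    have h4 : (2 * (k:ℝ) + 1 + 1) / ((2:ℕ):ℝ) = (k : ℝ) + 1 := by push_cast; ring
    rw [h3, h4, Real.Gamma_nat_eq_factorial]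
    rw [show -((k:ℝ) + 1) = -(((k+1 : ℕ) : ℝ)) by push_cast; ring]
    rw [Real.rpow_neg hc.le, Real.rpow_natCast]
    field_simp
    norm_num
  · filter_upwards [self_mem_ae_restrict measurableSet_Ioi] with x hx
    have : (0:ℝ) < x := hx
    positivity

theorem lintegral_comp_polarCoord_symm' (g : ℝ × ℝ → ENNReal) :
    ∫⁻ p in polarCoord.target, ENNReal.ofReal p.1 * g (polarCoord.symm p) = ∫⁻ p, g p := by
  set B : ℝ × ℝ → ℝ × ℝ →L[ℝ] ℝ × ℝ := fun p =>
    LinearMap.toContinuousLinearMap (Matrix.toLin (Module.Basis.finTwoProd ℝ) (Module.Basis.finTwoProd ℝ)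
      !![Real.cos p.2, -p.1 * Real.sin p.2; Real.sin p.2, p.1 * Real.cos p.2])
  have A : ∀ p ∈ polarCoord.target, HasFDerivWithinAt polarCoord.symm (B p) polarCoord.target p :=
    fun p _ => (hasFDerivAt_polarCoord_symm p).hasFDerivWithinAt
  have B_det : ∀ p, (B p).det = p.1 := by
    intro p
    conv_rhs => rw [← one_mul p.1, ← Real.cos_sq_add_sin_sq p.2]
    simp only [B, neg_mul, LinearMap.det_toContinuousLinearMap, LinearMap.det_toLin,
      Matrix.det_fin_two_of, sub_neg_eq_add]
    ring
  have hinj : Set.InjOn polarCoord.symm polarCoord.target := polarCoord.symm.injOn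
  have himg : polarCoord.symm '' polarCoord.target = polarCoord.source :=
    polarCoord.symm_image_target_eq_source
  symm
  calc
    ∫⁻ p, g p = ∫⁻ p in polarCoord.source, g p := by
      rw [← setLIntegral_univ]
      exact (setLIntegral_congr polarCoord_source_ae_eq_univ).symm
    _ = ∫⁻ p in polarCoord.symm '' polarCoord.target, g p := by rw [himg]
    _ = ∫⁻ p in polarCoord.target, ENNReal.ofReal |(B p).det| * g (polarCoord.symm p) :=
      lintegral_image_eq_lintegral_abs_det_fderiv_mul volume
        polarCoord.open_target.measurableSet A hinj g
    _ = ∫⁻ p in polarCoord.target, ENNReal.ofReal p.1 * g (polarCoord.symm p) := by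
      refine setLIntegral_congr_fun polarCoord.open_target.measurableSet
        (fun p hp => ?_)
      rw [B_det, abs_of_pos hp.1]

theorem Complex.lintegral_comp_polarCoord_symm' (g : ℂ → ENNReal) :
    ∫⁻ p in (Set.Ioi (0:ℝ) ×ˢ Set.Ioo (-Real.pi) Real.pi),
      ENNReal.ofReal p.1 * g (Complex.polarCoord.symm p) = ∫⁻ z, g z := by
  have h1 : ∫⁻ z, g z = ∫⁻ p : ℝ × ℝ, g (Complex.measurableEquivRealProd.symm p) := by
    rw [← MeasureTheory.MeasurePreserving.lintegral_comp_emb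
      (Complex.volume_preserving_equiv_real_prod.symm)
      Complex.measurableEquivRealProd.symm.measurableEmbedding g]
  rw [h1, ← _root_.lintegral_comp_polarCoord_symm'
    (fun p => g (Complex.measurableEquivRealProd.symm p))]
  rfl

lemma hasSum_coeff_mul {γ : ℝ} (hγ : 0 < γ) {a : ℕ → ℂ} {f : ℂ → ℂ}
    (hf : ∀ z : ℂ, HasSum (fun n : ℕ => a n * z ^ n) (f z)) (z : ℂ) :
    HasSum (fun k : ℕ => (∑ j ∈ Finset.range (k / 2 + 1),
        a (k - 2 * j) / ((γ : ℂ) ^ (2 * j) * (j.factorial : ℂ))) * z ^ k)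
      (Complex.exp (z ^ 2 / (γ : ℂ) ^ 2) * f z) := by
  classical
  have hγC : ((γ : ℂ)) ≠ 0 := by
    simpa using ne_of_gt hγ
  set w : ℂ := z ^ 2 / (γ : ℂ) ^ 2 with hw
  set u : ℕ → ℂ := fun m =>
    if Even m then w ^ (m / 2) / (((m / 2).factorial : ℕ) : ℂ) else 0 with hu
  have hinj : Function.Injective (fun j : ℕ => 2 * j) := fun x y h => by simp only at h; omega
  have hu0 : ∀ m, m ∉ Set.range (fun j : ℕ => 2 * j) → u m = 0 := by
    intro m hm
    have : ¬ Even m := by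
      intro ⟨t, ht⟩
      exact hm ⟨t, by show 2 * t = m; omega⟩
    simp [hu, this]
  have hcomp : ∀ j : ℕ, u (2 * j) = w ^ j / (j.factorial : ℂ) := by
    intro j
    have h2 : (2 * j) / 2 = j := by omega
    simp [hu, even_two_mul j, h2]
  have he : HasSum (fun j : ℕ => w ^ j / (j.factorial : ℂ)) (Complex.exp w) := by
    rw [Complex.exp_eq_exp_ℂ]
    exact NormedSpace.expSeries_div_hasSum_exp w
  have huS : HasSum u (Complex.exp w) := by
    rw [← Function.Injective.hasSum_iff hinj hu0]
    have hfun : (u ∘ fun j : ℕ => 2 * j) = fun j : ℕ => w ^ j / (j.factorial : ℂ) :=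
      funext fun j => by simpa [Function.comp] using hcomp j
    rw [hfun]
    exact he
  have hnu : Summable fun m => ‖u m‖ := by
    rw [← Function.Injective.summable_iff hinj (fun m hm => by rw [hu0 m hm, norm_zero])]
    have : Summable (fun j : ℕ => ‖w‖ ^ j / (j.factorial : ℝ)) :=
      Real.summable_pow_div_factorial ‖w‖
    refine this.congr fun j => ?_
    simp only [Function.comp, hcomp j, norm_div, norm_pow]
    simp
  have ha := summable_norm_coeff' hf z
  have hprod := hasSum_sum_range_mul_of_summable_norm hnu ha
  rw [huS.tsum_eq, (hf z).tsum_eq] at hprod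
  have hterm : ∀ k : ℕ, ∑ i ∈ Finset.range (k + 1), u i * (a (k - i) * z ^ (k - i))
      = (∑ j ∈ Finset.range (k / 2 + 1),
          a (k - 2 * j) / ((γ : ℂ) ^ (2 * j) * (j.factorial : ℂ))) * z ^ k := by
    intro k
    have hsub : (Finset.range (k / 2 + 1)).image (fun j => 2 * j) ⊆ Finset.range (k + 1) := by
      intro i hi
      simp only [Finset.mem_image, Finset.mem_range] at hi ⊢
      obtain ⟨j, hj, rfl⟩ := hi
      omega
    have hzero : ∀ i ∈ Finset.range (k + 1),
        i ∉ (Finset.range (k / 2 + 1)).image (fun j => 2 * j) →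
        u i * (a (k - i) * z ^ (k - i)) = 0 := by
      intro i _ hi
      have : ¬ Even i := by
        intro ⟨t, ht⟩
        refine hi ?_
        simp only [Finset.mem_image, Finset.mem_range]
        refine ⟨t, by simp only [Finset.mem_range] at *; omega, by omega⟩
      simp [hu, this]
    rw [← Finset.sum_subset hsub hzero]
    rw [Finset.sum_image (by intro x _ y _ h; simp only at h; omega)]
    rw [Finset.sum_mul]
    refine Finset.sum_congr rfl fun j hj => ?_
    have hjk : 2 * j ≤ k := by simp only [Finset.mem_range] at hj; omega
    have hzpow : z ^ (2 * j) * z ^ (k - 2 * j) = z ^ k := by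
      rw [← pow_add]; congr 1; omega
    have hu2 : u (2 * j) = z ^ (2 * j) / ((γ : ℂ) ^ (2 * j) * (j.factorial : ℂ)) := by
      rw [hcomp j, hw, div_pow, ← pow_mul, ← pow_mul, div_div]
    rw [hu2, ← hzpow]
    ring
  exact (funext hterm : _) ▸ hprod

lemma summable_sq_aux {c : ℕ → ℝ} (hc : Summable c) (h0 : ∀ k, 0 ≤ c k) :
    Summable (fun k => c k ^ 2) := by
  obtain ⟨C, hC⟩ := hc.tendsto_atTop_zero.bddAbove_range
  refine Summable.of_nonneg_of_le (fun k => sq_nonneg _) (fun k => ?_) (hc.mul_left C)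
  have h1 : c k ≤ C := hC (Set.mem_range_self k)
  calc c k ^ 2 = c k * c k := sq (c k)
  _ ≤ C * c k := mul_le_mul_of_nonneg_right h1 (h0 k)

lemma parseval_circle (b : ℕ → ℂ) (G : ℝ → ℂ) (r : ℝ) (hr : 0 < r)
    (hb : Summable fun k => ‖b k‖ * r ^ k)
    (hG : ∀ θ : ℝ, HasSum (fun k => b k * ((r : ℂ) * Complex.exp (θ * Complex.I)) ^ k) (G θ)) :
    ∫⁻ θ in Set.Ioo (-Real.pi) Real.pi, ENNReal.ofReal (‖G θ‖ ^ 2)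
      = ENNReal.ofReal (2 * Real.pi) * ∑' k, ENNReal.ofReal (‖b k‖ ^ 2 * r ^ (2 * k)) := by
  classical
  set T : Set ℝ := Set.Ioo (-Real.pi) Real.pi with hT
  set c : ℕ → ℂ := fun k => b k * (r : ℂ) ^ k with hcdef
  have hnc : ∀ k, ‖c k‖ = ‖b k‖ * r ^ k := fun k => by
    rw [hcdef]
    rw [norm_mul, norm_pow, Complex.norm_real, Real.norm_eq_abs, abs_of_pos hr]
  have hcs : Summable (fun k => ‖c k‖) := hb.congr fun k => (hnc k).symm
  have hsq : Summable (fun k => ‖c k‖ ^ 2) := summable_sq_aux hcs fun k => norm_nonneg _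
  have hexp1 : ∀ (x : ℂ), x.re = 0 → ‖Complex.exp x‖ = 1 := by
    intro x hx
    rw [Complex.norm_exp, hx, Real.exp_zero]
  have hre : ∀ (w : ℂ) (θ : ℝ), w.im = 0 → (w * (θ * Complex.I)).re = 0 := by
    intro w θ hw
    simp [Complex.mul_re, Complex.mul_im, hw]
  have hGθ : ∀ θ : ℝ, HasSum (fun k => c k * Complex.exp ((k : ℂ) * (θ * Complex.I))) (G θ) := by
    intro θ
    have heq : ∀ k : ℕ, b k * ((r : ℂ) * Complex.exp (θ * Complex.I)) ^ k
        = c k * Complex.exp ((k : ℂ) * (θ * Complex.I)) := by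
      intro k
      rw [mul_pow, ← Complex.exp_nat_mul, hcdef]
      ring_nf
    exact (funext heq : _) ▸ hG θ
  have hnrm : ∀ (k : ℕ) (θ : ℝ), ‖c k * Complex.exp ((k : ℂ) * (θ * Complex.I))‖ = ‖c k‖ := by
    intro k θ
    rw [norm_mul, hexp1 _ (hre _ θ (by simp)), mul_one]
  have hM : ∀ θ, ‖G θ‖ ≤ ∑' k, ‖c k‖ := by
    intro θ
    rw [← (hGθ θ).tsum_eq]
    refine (norm_tsum_le_tsum_norm ?_).trans_eq ?_
    · exact (hcs.congr fun k => (hnrm k θ).symm)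
    · exact tsum_congr fun k => hnrm k θ
  have hmeasG : Measurable G := by
    apply measurable_of_tendsto_metrizable
      (f := fun n (θ : ℝ) => ∑ k ∈ Finset.range n, c k * Complex.exp ((k : ℂ) * (θ * Complex.I)))
    · intro n
      refine Finset.measurable_sum _ fun k _ => Measurable.const_mul ?_ (c k)
      have hco : Continuous fun θ : ℝ => Complex.exp ((k : ℂ) * (θ * Complex.I)) := by
        fun_prop
      exact hco.measurable
    · exact tendsto_pi_nhds.2 fun θ => (hGθ θ).tendsto_sum_nat
  have hfin : IsFiniteMeasure (volume.restrict T) := by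
    constructor
    rw [Measure.restrict_apply MeasurableSet.univ, Set.univ_inter, hT, Real.volume_Ioo]
    exact ENNReal.ofReal_lt_top
  have hint2 : IntegrableOn (fun θ => ‖G θ‖ ^ 2) T := by
    refine ⟨(hmeasG.norm.pow_const 2).aestronglyMeasurable, ?_⟩
    apply HasFiniteIntegral.of_bounded (C := (∑' k, ‖c k‖) ^ 2)
    filter_upwards with θ
    have h6 := pow_le_pow_left₀ (norm_nonneg (G θ)) (hM θ) 2
    simpa [_root_.abs_of_nonneg (sq_nonneg ‖G θ‖)] using h6
  -- the product expansion
  set u : ℕ × ℕ → ℝ → ℂ := fun p θ =>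
    c p.1 * (starRingEnd ℂ) (c p.2) * Complex.exp (((p.1 : ℂ) - (p.2 : ℂ)) * (θ * Complex.I))
    with hudef
  have hnu : ∀ (p : ℕ × ℕ) (θ : ℝ), ‖u p θ‖ = ‖c p.1‖ * ‖c p.2‖ := by
    intro p θ
    rw [hudef]
    rw [norm_mul, norm_mul, hexp1 _ (hre _ θ (by simp)), RCLike.norm_conj, mul_one]
  have hptSum : ∀ θ, HasSum (fun p : ℕ × ℕ => u p θ) (G θ * (starRingEnd ℂ) (G θ)) := by
    intro θ
    have h1 := hGθ θ
    have h2 : HasSum (fun k => (starRingEnd ℂ) (c k * Complex.exp ((k : ℂ) * (θ * Complex.I))))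
        ((starRingEnd ℂ) (G θ)) := hasSum_conj'.2 h1
    have hA : Summable fun k =>
        ‖c k * Complex.exp ((k : ℂ) * (θ * Complex.I))‖ :=
      hcs.congr fun k => (hnrm k θ).symm
    have hB : Summable fun k =>
        ‖(starRingEnd ℂ) (c k * Complex.exp ((k : ℂ) * (θ * Complex.I)))‖ := by
      refine hcs.congr fun k => ?_
      rw [RCLike.norm_conj, hnrm k θ]
    have h3 := summable_mul_of_summable_norm hA hB
    have h4 := h1.mul h2 h3
    have heq : ∀ p : ℕ × ℕ,
        (c p.1 * Complex.exp ((p.1 : ℂ) * (θ * Complex.I))) *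
          ((starRingEnd ℂ) (c p.2 * Complex.exp ((p.2 : ℂ) * (θ * Complex.I)))) = u p θ := by
      intro p
      have hconjB : (starRingEnd ℂ) ((p.2 : ℂ) * ((θ : ℂ) * Complex.I))
          = -((p.2 : ℂ) * ((θ : ℂ) * Complex.I)) := by
        simp [map_mul, Complex.conj_ofReal, Complex.conj_I]
      rw [map_mul, ← Complex.exp_conj, hconjB, hudef]
      have hee : Complex.exp ((p.1 : ℂ) * (↑θ * Complex.I)) *
          Complex.exp (-((p.2 : ℂ) * (↑θ * Complex.I)))
          = Complex.exp (((p.1 : ℂ) - (p.2 : ℂ)) * (↑θ * Complex.I)) := by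
        rw [← Complex.exp_add]
        congr 1
        ring
      calc c p.1 * Complex.exp ((p.1:ℂ) * (↑θ * Complex.I)) *
            ((starRingEnd ℂ) (c p.2) * Complex.exp (-((p.2:ℂ) * (↑θ * Complex.I))))
          = c p.1 * (starRingEnd ℂ) (c p.2) *
            (Complex.exp ((p.1:ℂ) * (↑θ * Complex.I)) *
              Complex.exp (-((p.2:ℂ) * (↑θ * Complex.I)))) := by ring
        _ = _ := by rw [hee]
    exact (funext heq : _) ▸ h4
  -- volume of T
  have hpi : -Real.pi ≤ Real.pi := by linarith [Real.pi_pos]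
  have hvolT : volume T = ENNReal.ofReal (2 * Real.pi) := by
    rw [hT, Real.volume_Ioo]
    congr 1
    ring
  -- measurability of each u p
  have hmeasu : ∀ p : ℕ × ℕ, AEStronglyMeasurable (u p) (volume.restrict T) := by
    intro p
    apply Continuous.aestronglyMeasurable
    show Continuous fun θ : ℝ =>
      c p.1 * (starRingEnd ℂ) (c p.2) * Complex.exp (((p.1 : ℂ) - (p.2 : ℂ)) * (θ * Complex.I))
    fun_prop
  -- summability of the lintegral bound
  have htsumlt : ∑' p : ℕ × ℕ, ∫⁻ θ in T, ‖u p θ‖₊ ∂volume ≠ ⊤ := by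
    have hval : ∀ p : ℕ × ℕ, ∫⁻ θ in T, (‖u p θ‖₊ : ENNReal) ∂volume
        = ENNReal.ofReal ‖c p.1‖ * ENNReal.ofReal ‖c p.2‖ * ENNReal.ofReal (2 * Real.pi) := by
      intro p
      have hpt : ∀ θ : ℝ, (‖u p θ‖₊ : ENNReal)
          = ENNReal.ofReal ‖c p.1‖ * ENNReal.ofReal ‖c p.2‖ := by
        intro θ
        rw [← enorm_eq_nnnorm, ← ofReal_norm, hnu p θ, ENNReal.ofReal_mul (norm_nonneg _)]
      simp_rw [hpt]
      rw [lintegral_const, Measure.restrict_apply MeasurableSet.univ, Set.univ_inter, hvolT]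
    simp_rw [hval]
    rw [ENNReal.tsum_mul_right, ENNReal.tsum_prod']
    simp_rw [ENNReal.tsum_mul_left, ENNReal.tsum_mul_right]
    have hS : (∑' k, ENNReal.ofReal ‖c k‖) ≠ ⊤ := by
      rw [← ENNReal.ofReal_tsum_of_nonneg (fun k => norm_nonneg _) hcs]
      exact ENNReal.ofReal_ne_top
    exact ENNReal.mul_ne_top (ENNReal.mul_ne_top hS hS) ENNReal.ofReal_ne_top
  -- value of each integral
  have hterm : ∀ p : ℕ × ℕ, (∫ θ in T, u p θ)
      = if p.1 = p.2 then ((2 * Real.pi : ℝ) : ℂ) * (c p.1 * (starRingEnd ℂ) (c p.2)) else 0 := by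
    intro p
    rcases eq_or_ne p.1 p.2 with h | h
    · rw [if_pos h]
      have hconst : ∀ θ : ℝ, u p θ = c p.1 * (starRingEnd ℂ) (c p.2) := by
        intro θ
        rw [hudef]
        show c p.1 * (starRingEnd ℂ) (c p.2) * Complex.exp (((p.1 : ℂ) - (p.2 : ℂ)) * (θ * Complex.I)) = _
        rw [h, sub_self, zero_mul, Complex.exp_zero, mul_one]
      simp_rw [hconst]
      rw [setIntegral_const, measureReal_def, hvolT, ENNReal.toReal_ofReal (by positivity), Complex.real_smul]
    · rw [if_neg h]
      have hK : ((p.1 : ℂ) - (p.2 : ℂ)) ≠ 0 := by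
        rw [sub_ne_zero]
        exact_mod_cast fun hh => h (by exact_mod_cast hh)
      have hKI : ((p.1 : ℂ) - (p.2 : ℂ)) * Complex.I ≠ 0 := mul_ne_zero hK Complex.I_ne_zero
      have hrw : ∀ θ : ℝ, u p θ = (c p.1 * (starRingEnd ℂ) (c p.2)) *
          Complex.exp ((((p.1 : ℂ) - (p.2 : ℂ)) * Complex.I) * (θ : ℂ)) := by
        intro θ
        rw [hudef]
        show c p.1 * (starRingEnd ℂ) (c p.2) * Complex.exp (((p.1 : ℂ) - (p.2 : ℂ)) * (θ * Complex.I)) = _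
        congr 2
        ring
      simp_rw [hrw]
      rw [MeasureTheory.integral_const_mul]
      have hIoc : (∫ θ : ℝ in T,
          Complex.exp ((((p.1 : ℂ) - (p.2 : ℂ)) * Complex.I) * (θ : ℂ)))
          = ∫ θ : ℝ in Set.Ioc (-Real.pi) Real.pi,
            Complex.exp ((((p.1 : ℂ) - (p.2 : ℂ)) * Complex.I) * (θ : ℂ)) := by
        apply setIntegral_congr_set
        exact Ioo_ae_eq_Ioc
      rw [hIoc, ← intervalIntegral.integral_of_le hpi,
        _root_.integral_exp_mul_complex hKI]
      set n : ℤ := (p.1 : ℤ) - (p.2 : ℤ) with hn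
      have hcast : ((p.1 : ℂ) - (p.2 : ℂ)) = (n : ℂ) := by
        rw [hn]
        push_cast
        ring
      have h1 : Complex.exp (((p.1 : ℂ) - (p.2 : ℂ)) * Complex.I * (Real.pi : ℂ))
          = (-1 : ℂ) ^ n := by
        rw [hcast, show (n : ℂ) * Complex.I * (Real.pi : ℂ)
          = (n : ℂ) * ((Real.pi : ℂ) * Complex.I) by ring, Complex.exp_int_mul,
          Complex.exp_pi_mul_I]
      have h2 : Complex.exp (((p.1 : ℂ) - (p.2 : ℂ)) * Complex.I * ((-Real.pi : ℝ) : ℂ))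
          = (-1 : ℂ) ^ (-n) := by
        rw [hcast, show (n : ℂ) * Complex.I * ((-Real.pi : ℝ) : ℂ)
          = ((-n : ℤ) : ℂ) * ((Real.pi : ℂ) * Complex.I) by push_cast; ring,
          Complex.exp_int_mul, Complex.exp_pi_mul_I]
      have h3 : ((-1 : ℂ)) ^ (-n) = (-1 : ℂ) ^ n := by
        rw [zpow_neg]
        refine inv_eq_of_mul_eq_one_left ?_
        rw [← zpow_add₀ (by norm_num : (-1 : ℂ) ≠ 0), show n + n = 2 * n by ring,
          zpow_mul]
        norm_num
      rw [h1, h2, h3, sub_self, zero_div, mul_zero]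
  -- complex integral identity
  have hcomplex : (∫ θ in T, ((‖G θ‖ ^ 2 : ℝ) : ℂ)) = ∑' p : ℕ × ℕ, ∫ θ in T, u p θ := by
    rw [← integral_tsum hmeasu htsumlt]
    refine setIntegral_congr_fun measurableSet_Ioo fun θ _ => ?_
    rw [(hptSum θ).tsum_eq, Complex.mul_conj, Complex.normSq_eq_norm_sq]
  -- diagonal sum
  have hdiagSum : HasSum (fun p : ℕ × ℕ =>
      if p.1 = p.2 then ((2 * Real.pi : ℝ) : ℂ) * (c p.1 * (starRingEnd ℂ) (c p.2)) else 0)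
      (((2 * Real.pi * ∑' k, ‖c k‖ ^ 2 : ℝ)) : ℂ) := by
    have hv : HasSum (fun k : ℕ => ((2 * Real.pi * ‖c k‖ ^ 2 : ℝ) : ℂ))
        (((2 * Real.pi * ∑' k, ‖c k‖ ^ 2 : ℝ)) : ℂ) := by
      have h7 : HasSum (fun k => 2 * Real.pi * ‖c k‖ ^ 2) (2 * Real.pi * ∑' k, ‖c k‖ ^ 2) :=
        hsq.hasSum.mul_left (2 * Real.pi)
      exact h7.mapL Complex.ofRealCLM
    have hdig : Function.Injective (fun k : ℕ => ((k, k) : ℕ × ℕ)) := fun x y hxy => by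
      exact congrArg Prod.fst hxy
    have h0 : ∀ p : ℕ × ℕ, p ∉ Set.range (fun k : ℕ => ((k, k) : ℕ × ℕ)) →
        (if p.1 = p.2 then ((2 * Real.pi : ℝ) : ℂ) * (c p.1 * (starRingEnd ℂ) (c p.2)) else 0)
          = 0 := by
      intro p hp
      rw [if_neg]
      intro hpe
      exact hp ⟨p.1, by rw [Prod.ext_iff]; exact ⟨rfl, hpe⟩⟩
    rw [← Function.Injective.hasSum_iff hdig h0]
    have hfe : ((fun p : ℕ × ℕ =>
        if p.1 = p.2 then ((2 * Real.pi : ℝ) : ℂ) * (c p.1 * (starRingEnd ℂ) (c p.2)) else 0)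
          ∘ fun k : ℕ => ((k, k) : ℕ × ℕ))
        = fun k : ℕ => ((2 * Real.pi * ‖c k‖ ^ 2 : ℝ) : ℂ) := by
      funext k
      show (if k = k then ((2 * Real.pi : ℝ) : ℂ) * (c k * (starRingEnd ℂ) (c k)) else 0) = _
      rw [if_pos rfl, Complex.mul_conj, Complex.normSq_eq_norm_sq]
      push_cast
      ring
    rw [hfe]
    exact hv
  have hreal : (∫ θ in T, ‖G θ‖ ^ 2) = 2 * Real.pi * ∑' k, ‖c k‖ ^ 2 := by
    have hio : (∫ θ in T, ((‖G θ‖ ^ 2 : ℝ) : ℂ)) = ((∫ θ in T, ‖G θ‖ ^ 2 : ℝ) : ℂ) :=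
      integral_ofReal
    have h5 : ((∫ θ in T, ‖G θ‖ ^ 2 : ℝ) : ℂ) = ((2 * Real.pi * ∑' k, ‖c k‖ ^ 2 : ℝ) : ℂ) := by
      rw [← hio, hcomplex, tsum_congr hterm, hdiagSum.tsum_eq]
    exact_mod_cast h5
  rw [← ofReal_integral_eq_lintegral_ofReal hint2
    (Filter.Eventually.of_forall fun θ => sq_nonneg _), hreal,
    ENNReal.ofReal_mul (by positivity), ENNReal.ofReal_tsum_of_nonneg (fun k => sq_nonneg _) hsq]
  congr 1
  refine tsum_congr fun k => ?_
  congr 1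
  rw [hnc k, mul_pow, ← pow_mul, mul_comm k 2]

theorem rbf_sequential_characterization (γ : ℝ) (hγ : 0 < γ)
    (f : ℂ → ℂ) (a : ℕ → ℂ)
    (hf : ∀ z : ℂ, HasSum (fun n : ℕ => a n * z ^ n) (f z)) :
    (∫⁻ z : ℂ, ENNReal.ofReal (rbfDensity γ f z)) < ⊤ ↔
      Summable (fun k : ℕ =>
        ((k.factorial : ℝ) * γ ^ (2 * k) / 2 ^ k) *
          ‖∑ j ∈ Finset.range (k / 2 + 1),
              a (k - 2 * j) / ((γ : ℂ) ^ (2 * j) * (j.factorial : ℂ))‖ ^ 2) := by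
  classical
  have hγ2 : (0:ℝ) < γ ^ 2 := by positivity
  set b : ℕ → ℂ := fun k => ∑ j ∈ Finset.range (k / 2 + 1),
      a (k - 2 * j) / ((γ : ℂ) ^ (2 * j) * (j.factorial : ℂ)) with hbdef
  set g : ℂ → ℂ := fun z => Complex.exp (z ^ 2 / (γ : ℂ) ^ 2) * f z with hgdef
  have hg : ∀ z : ℂ, HasSum (fun k => b k * z ^ k) (g z) := fun z => hasSum_coeff_mul hγ hf z
  set c : ℝ := 2 / γ ^ 2 with hcdef2
  have hc : 0 < c := by positivity
  set F : ℂ → ENNReal :=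
    fun z => ENNReal.ofReal (‖g z‖ ^ 2 * Real.exp (-c * Complex.normSq z)) with hFdef
  -- pointwise identity
  have hpt : ∀ z : ℂ, ENNReal.ofReal (rbfDensity γ f z)
      = ENNReal.ofReal (2 / (Real.pi * γ ^ 2)) * F z := by
    intro z
    have hng : ‖g z‖ = Real.exp ((z.re ^ 2 - z.im ^ 2) / γ ^ 2) * ‖f z‖ := by
      rw [hgdef]
      show ‖Complex.exp (z ^ 2 / (γ : ℂ) ^ 2) * f z‖ = _
      rw [norm_mul, Complex.norm_exp]
      congr 2
      rw [show ((γ : ℂ) ^ 2) = ((γ ^ 2 : ℝ) : ℂ) by push_cast; ring, Complex.div_ofReal_re]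
      congr 1
      rw [sq z, Complex.mul_re]
      ring
    have h0 : ‖g z‖ ^ 2 * Real.exp (-c * Complex.normSq z)
        = ‖f z‖ ^ 2 * Real.exp (-(4 * z.im ^ 2) / γ ^ 2) := by
      rw [hng, mul_pow, ← Real.exp_nat_mul, Complex.normSq_apply]
      rw [show -(4 * z.im ^ 2) / γ ^ 2
        = (2:ℕ) * ((z.re ^ 2 - z.im ^ 2) / γ ^ 2) + (-c * (z.re * z.re + z.im * z.im)) by
          rw [hcdef2]; push_cast; field_simp; ring]
      rw [Real.exp_add]
      ring
    rw [hFdef]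
    show ENNReal.ofReal (rbfDensity γ f z)
      = ENNReal.ofReal (2 / (Real.pi * γ ^ 2)) *
        ENNReal.ofReal (‖g z‖ ^ 2 * Real.exp (-c * Complex.normSq z))
    rw [h0, ← ENNReal.ofReal_mul (by positivity)]
    congr 1
    rw [rbfDensity]
    ring
  -- measurability
  have hgm : Measurable g := measurable_of_hasSum' hg
  have hFm : Measurable F := by
    rw [hFdef]
    apply Measurable.ennreal_ofReal
    apply Measurable.mul
    · exact hgm.norm.pow_const 2
    · have hcont : Continuous fun z : ℂ => Real.exp (-c * Complex.normSq z) :=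
        Real.continuous_exp.comp (continuous_const.mul Complex.continuous_normSq)
      exact hcont.measurable
  have hsymmc : Continuous fun p : ℝ × ℝ => (Complex.polarCoord.symm p : ℂ) := by
    have hp : (fun p : ℝ × ℝ => (Complex.polarCoord.symm p : ℂ))
        = fun p => (p.1 : ℂ) * ((Real.cos p.2 : ℂ) + (Real.sin p.2 : ℂ) * Complex.I) := by
      funext p
      rw [Complex.polarCoord_symm_apply]
    rw [hp]
    fun_prop
  -- the key computation
  have hkey : ∫⁻ z : ℂ, F z = ∑' k, ENNReal.ofReal
      (2 * Real.pi * ‖b k‖ ^ 2 * ((k.factorial : ℝ) / (2 * c ^ (k + 1)))) := by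
    rw [← Complex.lintegral_comp_polarCoord_symm' F]
    have hmeq : (volume : Measure (ℝ × ℝ)).restrict (Set.Ioi (0:ℝ) ×ˢ Set.Ioo (-Real.pi) Real.pi)
        = (volume.restrict (Set.Ioi (0:ℝ))).prod (volume.restrict (Set.Ioo (-Real.pi) Real.pi)) := by
      rw [Measure.volume_eq_prod, Measure.prod_restrict]
    have hΦm : Measurable fun p : ℝ × ℝ => ENNReal.ofReal p.1 * F (Complex.polarCoord.symm p) :=
      (measurable_fst.ennreal_ofReal).mul (hFm.comp hsymmc.measurable)
    rw [hmeq, lintegral_prod _ hΦm.aemeasurable]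
    -- inner integral
    have hinner : ∀ r ∈ Set.Ioi (0:ℝ),
        (∫⁻ θ in Set.Ioo (-Real.pi) Real.pi,
          ENNReal.ofReal (r, θ).1 * F (Complex.polarCoord.symm (r, θ)))
        = ∑' k, ENNReal.ofReal
            (2 * Real.pi * ‖b k‖ ^ 2 * (r ^ (2 * k + 1) * Real.exp (-c * r ^ 2))) := by
      intro r hr
      have hr0 : (0:ℝ) < r := hr
      have hzθ : ∀ θ : ℝ, (Complex.polarCoord.symm (r, θ) : ℂ)
          = (r : ℂ) * Complex.exp (θ * Complex.I) := by
        intro θ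
        rw [Complex.polarCoord_symm_apply, Complex.exp_mul_I]
        push_cast
        ring
      have hnormSq : ∀ θ : ℝ, Complex.normSq (Complex.polarCoord.symm (r, θ)) = r ^ 2 := by
        intro θ
        rw [Complex.normSq_eq_norm_sq, Complex.norm_polarCoord_symm]
        rw [abs_of_pos hr0]
      set G : ℝ → ℂ := fun θ => g ((r : ℂ) * Complex.exp (θ * Complex.I)) with hGdef
      have hGsum : ∀ θ : ℝ, HasSum (fun k => b k * ((r : ℂ) * Complex.exp (θ * Complex.I)) ^ k)
          (G θ) := fun θ => hg _
      have hbr : Summable fun k => ‖b k‖ * r ^ k := by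
        have h8 := summable_norm_coeff' hg ((r : ℝ) : ℂ)
        refine h8.congr fun k => ?_
        rw [norm_mul, norm_pow, Complex.norm_real, Real.norm_eq_abs, abs_of_pos hr0]
      have hpars := parseval_circle b G r hr0 hbr hGsum
      have hintegrand : ∀ θ ∈ Set.Ioo (-Real.pi) Real.pi,
          ENNReal.ofReal (r, θ).1 * F (Complex.polarCoord.symm (r, θ))
          = ENNReal.ofReal (r * Real.exp (-c * r ^ 2)) * ENNReal.ofReal (‖G θ‖ ^ 2) := by
        intro θ _
        rw [hFdef]
        show ENNReal.ofReal r * ENNReal.ofReal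
            (‖g (Complex.polarCoord.symm (r, θ))‖ ^ 2 *
              Real.exp (-c * Complex.normSq (Complex.polarCoord.symm (r, θ))))
          = _
        rw [hnormSq θ, hzθ θ]
        rw [ENNReal.ofReal_mul (by positivity), ENNReal.ofReal_mul hr0.le]
        show ENNReal.ofReal r * (ENNReal.ofReal (‖G θ‖ ^ 2) *
            ENNReal.ofReal (Real.exp (-c * r ^ 2))) = _
        ring
      rw [setLIntegral_congr_fun measurableSet_Ioo hintegrand]
      rw [lintegral_const_mul' _ _ ENNReal.ofReal_ne_top, hpars]
      rw [← ENNReal.tsum_mul_left, ← ENNReal.tsum_mul_left]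
      refine tsum_congr fun k => ?_
      rw [← ENNReal.ofReal_mul (by positivity), ← ENNReal.ofReal_mul (by positivity)]
      congr 1
      rw [pow_add, pow_mul]
      ring
    rw [setLIntegral_congr_fun measurableSet_Ioi hinner]
    rw [lintegral_tsum (fun k => ?_)]
    swap
    · apply Measurable.aemeasurable
      apply Measurable.ennreal_ofReal
      fun_prop
    refine tsum_congr fun k => ?_
    have hsplit : ∀ r : ℝ, ENNReal.ofReal
        (2 * Real.pi * ‖b k‖ ^ 2 * (r ^ (2 * k + 1) * Real.exp (-c * r ^ 2)))
        = ENNReal.ofReal (2 * Real.pi * ‖b k‖ ^ 2) *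
          ENNReal.ofReal (r ^ (2 * k + 1) * Real.exp (-c * r ^ 2)) := by
      intro r
      rw [ENNReal.ofReal_mul (by positivity)]
    simp_rw [hsplit]
    rw [lintegral_const_mul' _ _ ENNReal.ofReal_ne_top, radial_lintegral hc k,
      ← ENNReal.ofReal_mul (by positivity)]
  -- assemble
  have htotal : (∫⁻ z : ℂ, ENNReal.ofReal (rbfDensity γ f z))
      = ∑' k, ENNReal.ofReal
          (((k.factorial : ℝ) * γ ^ (2 * k) / 2 ^ k) * ‖b k‖ ^ 2) := by
    calc ∫⁻ z : ℂ, ENNReal.ofReal (rbfDensity γ f z)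
        = ∫⁻ z : ℂ, ENNReal.ofReal (2 / (Real.pi * γ ^ 2)) * F z := by
          simp_rw [hpt]
      _ = ENNReal.ofReal (2 / (Real.pi * γ ^ 2)) * ∫⁻ z : ℂ, F z :=
          lintegral_const_mul' _ _ ENNReal.ofReal_ne_top
      _ = ∑' k, ENNReal.ofReal (2 / (Real.pi * γ ^ 2)) * ENNReal.ofReal
            (2 * Real.pi * ‖b k‖ ^ 2 * ((k.factorial : ℝ) / (2 * c ^ (k + 1)))) := by
          rw [hkey, ENNReal.tsum_mul_left]
      _ = ∑' k, ENNReal.ofReal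
            (((k.factorial : ℝ) * γ ^ (2 * k) / 2 ^ k) * ‖b k‖ ^ 2) := by
          refine tsum_congr fun k => ?_
          rw [← ENNReal.ofReal_mul (by positivity)]
          congr 1
          rw [hcdef2, div_pow, pow_mul]
          have hpi0 : (0:ℝ) < Real.pi := Real.pi_pos
          have h2γ : ((γ:ℝ)^2)^(k+1) ≠ 0 := by positivity
          field_simp
          ring
  rw [htotal, tsum_ofReal_lt_top_iff (fun k => by positivity)]
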